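/- The map C_u from functions on Fin n × Fin n to n×n complex matrices is a unitary isomorphism: it is a complex-linear bijection, and for all f, g : Fin n × Fin n → ℂ, ⟨C_u f, C_u g⟩_HS = ⟨f, g⟩_u. -/

import Mathlib

open Finset Matrix

/-- The symbol-to-operator map `C_u`. -/
noncomputable def Cmap {ι : Type*} [Fintype ι] (u : Matrix ι ι ℂ) (f : ι × ι → ℂ) :
    Matrix ι ι ℂ :=
  fun k k' => ∑ l, u k l * f (k, l) * (starRingEnd ℂ) (u k' l)

/-- The Hermitian product `⟨f,g⟩_u` on functions on `ι × ι`. -/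
noncomputable def innerU {ι : Type*} [Fintype ι] (u : Matrix ι ι ℂ) (f g : ι × ι → ℂ) : ℂ :=
  ∑ k, ∑ l, f (k, l) * (starRingEnd ℂ) (g (k, l)) * ((‖u k l‖) ^ 2 : ℝ)

/-- The Hilbert–Schmidt Hermitian product on matrices. -/
noncomputable def innerHS {ι : Type*} [Fintype ι] (X Y : Matrix ι ι ℂ) : ℂ :=
  (X * Yᴴ).trace

/-- `C_u` is a unitary isomorphism from `(F(M), ⟨·,·⟩_u)` to
`(End F(K), ⟨·,·⟩_HS)`: it is a complex-linear bijection preserving the Hermitian products. -/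
theorem stmt0 (n : ℕ) (hn : 1 ≤ n) (u : Matrix (Fin n) (Fin n) ℂ)
    (hu : u * uᴴ = 1) (hne : ∀ k l, u k l ≠ 0) :
    Function.Bijective (Cmap u) ∧
    (∀ f g : Fin n × Fin n → ℂ, Cmap u (f + g) = Cmap u f + Cmap u g) ∧
    (∀ (c : ℂ) (f : Fin n × Fin n → ℂ), Cmap u (c • f) = c • Cmap u f) ∧
    (∀ f g : Fin n × Fin n → ℂ, innerHS (Cmap u f) (Cmap u g) = innerU u f g) := by
  have h1 : uᴴ * u = 1 := mul_eq_one_comm.mp hu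
  have key : ∀ l l' : Fin n,
      (∑ j, (starRingEnd ℂ) (u j l) * u j l') = if l = l' then 1 else 0 := by
    intro l l'
    have := congrFun (congrFun h1 l) l'
    simpa [Matrix.mul_apply, Matrix.conjTranspose_apply, Matrix.one_apply] using this
  have key2 : ∀ k k' : Fin n,
      (∑ l, u k l * (starRingEnd ℂ) (u k' l)) = if k = k' then 1 else 0 := by
    intro k k'
    have := congrFun (congrFun hu k) k'
    simpa [Matrix.mul_apply, Matrix.conjTranspose_apply, Matrix.one_apply] using this
  refine ⟨?_, ?_, ?_, ?_⟩
  · refine Function.bijective_iff_has_inverse.mpr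
      ⟨fun X p => (∑ j, X p.1 j * u j p.2) / u p.1 p.2, ?_, ?_⟩
    · intro f
      funext p
      obtain ⟨k, l⟩ := p
      show (∑ j, (∑ l', u k l' * f (k, l') * (starRingEnd ℂ) (u j l')) * u j l) / u k l
        = f (k, l)
      have : (∑ j, (∑ l', u k l' * f (k, l') * (starRingEnd ℂ) (u j l')) * u j l)
          = ∑ l', u k l' * f (k, l') * ∑ j, (starRingEnd ℂ) (u j l') * u j l := by
        simp only [Finset.sum_mul]
        rw [Finset.sum_comm]
        refine Finset.sum_congr rfl fun l' _ => ?_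
        rw [Finset.mul_sum]
        exact Finset.sum_congr rfl fun j _ => by ring
      rw [this]
      simp only [key, mul_ite, mul_one, mul_zero, Finset.sum_ite_eq, Finset.sum_ite_eq', Finset.mem_univ, if_true]
      exact mul_div_cancel_left₀ (f (k, l)) (hne k l)
    · intro X
      funext k k'
      show (∑ l, u k l * ((∑ j, X k j * u j l) / u k l) * (starRingEnd ℂ) (u k' l)) = X k k'
      have step : ∀ l, u k l * ((∑ j, X k j * u j l) / u k l) * (starRingEnd ℂ) (u k' l)
          = ∑ j, X k j * (u j l * (starRingEnd ℂ) (u k' l)) := by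
        intro l
        rw [mul_comm (u k l), div_mul_cancel₀ _ (hne k l), Finset.sum_mul]
        exact Finset.sum_congr rfl fun j _ => by ring
      simp only [step]
      rw [Finset.sum_comm]
      simp only [← Finset.mul_sum, key2, mul_ite, mul_one, mul_zero,
        Finset.sum_ite_eq, Finset.sum_ite_eq', Finset.mem_univ, if_true]
  · intro f g
    funext k k'
    show (∑ l, u k l * (f + g) (k, l) * (starRingEnd ℂ) (u k' l))
      = (∑ l, u k l * f (k, l) * (starRingEnd ℂ) (u k' l))
        + ∑ l, u k l * g (k, l) * (starRingEnd ℂ) (u k' l)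
    rw [← Finset.sum_add_distrib]
    exact Finset.sum_congr rfl fun l _ => by simp [Pi.add_apply]; ring
  · intro c f
    funext k k'
    show (∑ l, u k l * (c • f) (k, l) * (starRingEnd ℂ) (u k' l))
      = c * ∑ l, u k l * f (k, l) * (starRingEnd ℂ) (u k' l)
    rw [Finset.mul_sum]
    exact Finset.sum_congr rfl fun l _ => by simp [Pi.smul_apply]; ring
  · intro f g
    unfold innerHS innerU
    rw [Matrix.trace]
    simp only [Matrix.diag_apply, Matrix.mul_apply, Matrix.conjTranspose_apply]
    refine Finset.sum_congr rfl fun k _ => ?_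
    have hC : ∀ j, star (Cmap u g k j)
        = ∑ l', (starRingEnd ℂ) (u k l') * (starRingEnd ℂ) (g (k, l')) * u j l' := by
      intro j
      show (starRingEnd ℂ) (∑ l', u k l' * g (k, l') * (starRingEnd ℂ) (u j l')) = _
      rw [map_sum]
      refine Finset.sum_congr rfl fun l' _ => ?_
      simp only [_root_.map_mul, Complex.conj_conj]
    have expand : (∑ j, Cmap u f k j * star (Cmap u g k j))
        = ∑ l, ∑ l', (u k l * f (k, l)
            * ((starRingEnd ℂ) (u k l') * (starRingEnd ℂ) (g (k, l'))))
            * ∑ j, (starRingEnd ℂ) (u j l) * u j l' := by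
      simp only [hC]
      simp only [Cmap]
      simp only [Finset.sum_mul_sum]
      rw [Finset.sum_comm]
      refine Finset.sum_congr rfl fun l _ => ?_
      rw [Finset.sum_comm]
      refine Finset.sum_congr rfl fun l' _ => ?_
      rw [Finset.mul_sum]
      exact Finset.sum_congr rfl fun j _ => by ring
    rw [expand]
    simp only [key, mul_ite, mul_one, mul_zero, Finset.sum_ite_eq, Finset.sum_ite_eq',
      Finset.mem_univ, if_true]
    refine Finset.sum_congr rfl fun l _ => ?_
    rw [show ((‖u k l‖) ^ 2 : ℝ) = Complex.normSq (u k l) from Complex.sq_norm _,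
      ← Complex.mul_conj]
    ring
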